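/- Let K be an algebraically closed field of characteristic 0 and n ∈ {7, 8}. For every t ∈ K, the alternating bilinear bracket on K^n with basis e₁,…,e_n determined by [e₁, e_i] = e_{i+1} for 2 ≤ i ≤ n−1 with i ≠ 3; [e₂, e_i] = (1 − (i−4)t)·e_{i+2} for 4 ≤ i ≤ n−2; [e₃, e_i] = t·e_{i+3} for 4 ≤ i ≤ n−3; and [e_i, e_j] = 0 for all other pairs i < j, satisfies the Jacobi identity, hence defines a Lie algebra 𝔞_{4,n}(t). -/
import Mathlib


/-- The basis vector `e_{p+1}` of `K^n` (0-based index `p`). -/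
def stdVec (K : Type) [Field K] (n p : ℕ) : Fin n → K :=
  fun k => if (k : ℕ) = p then 1 else 0

/-- The values `[e_{i+1}, e_{j+1}]` (0-based `i < j`) of the bracket of `𝔞_{4,n}(t)`:
`[e₁,e_i] = e_{i+1}` for `2 ≤ i ≤ n−1`, `i ≠ 3`; `[e₂,e_i] = (1−(i−4)t)e_{i+2}` for
`4 ≤ i ≤ n−2`; `[e₃,e_i] = t e_{i+3}` for `4 ≤ i ≤ n−3`; all other brackets `0`. -/
noncomputable def aBrVal {K : Type} [Field K] (n : ℕ) (t : K) (i j : ℕ) : Fin n → K :=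
  if i = 0 ∧ 1 ≤ j ∧ j + 2 ≤ n ∧ j ≠ 2 then stdVec K n (j + 1)
  else if i = 1 ∧ 3 ≤ j ∧ j + 3 ≤ n then (1 - ((j : K) - 3) * t) • stdVec K n (j + 2)
  else if i = 2 ∧ 3 ≤ j ∧ j + 4 ≤ n then t • stdVec K n (j + 3)
  else 0

/-- The alternating bilinear bracket of `𝔞_{4,n}(t)` on `K^n`, determined by the values
`aBrVal` on basis vectors together with antisymmetry. -/
noncomputable def aBr {K : Type} [Field K] (n : ℕ) (t : K) (x y : Fin n → K) :
    Fin n → K :=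
  ∑ i : Fin n, ∑ j : Fin n,
    (x i * y j) •
      (if (i : ℕ) < (j : ℕ) then aBrVal n t i j
       else if (j : ℕ) < (i : ℕ) then -aBrVal n t j i else 0)

/-! ### Auxiliary scalar coefficients -/

/-- Scalar coefficient of `aBrVal`. -/
def fc {K : Type} [Field K] (n : ℕ) (t : K) (i j : ℕ) : K :=
  if i = 0 ∧ 1 ≤ j ∧ j + 2 ≤ n ∧ j ≠ 2 then 1
  else if i = 1 ∧ 3 ≤ j ∧ j + 3 ≤ n then 1 - ((j : K) - 3) * t
  else if i = 2 ∧ 3 ≤ j ∧ j + 4 ≤ n then t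
  else 0

/-- Antisymmetrized scalar coefficient. -/
def gc {K : Type} [Field K] (n : ℕ) (t : K) (i j : ℕ) : K :=
  if i < j then fc n t i j else if j < i then - fc n t j i else 0

lemma stdVec_big {K : Type} [Field K] {n p : ℕ} (h : n ≤ p) : stdVec K n p = 0 := by
  funext k
  have : (k : ℕ) ≠ p := by omega
  simp [stdVec, this]

lemma aBrVal_eq {K : Type} [Field K] (n : ℕ) (t : K) (i j : ℕ) :
    aBrVal n t i j = fc n t i j • stdVec K n (i + j + 1) := by
  unfold aBrVal fc
  split_ifs with h1 h2 h3
  · obtain ⟨rfl, -⟩ := h1; simp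
  · obtain ⟨rfl, -⟩ := h2
    have : 1 + j + 1 = j + 2 := by omega
    rw [this]
  · obtain ⟨rfl, -⟩ := h3
    have : 2 + j + 1 = j + 3 := by omega
    rw [this]
  · simp

lemma term_eq {K : Type} [Field K] (n : ℕ) (t : K) (i j : ℕ) :
    (if i < j then aBrVal n t i j
       else if j < i then -aBrVal n t j i else 0)
      = gc n t i j • stdVec K n (i + j + 1) := by
  unfold gc
  split_ifs with h h'
  · exact aBrVal_eq n t i j
  · rw [aBrVal_eq, show j + i + 1 = i + j + 1 from by omega, neg_smul]
  · simp

lemma aBr_eq {K : Type} [Field K] (n : ℕ) (t : K) (x y : Fin n → K) :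
    aBr n t x y
      = ∑ i : Fin n, ∑ j : Fin n,
          (x i * y j * gc n t i j) • stdVec K n ((i : ℕ) + (j : ℕ) + 1) := by
  unfold aBr
  refine Finset.sum_congr rfl fun i _ => Finset.sum_congr rfl fun j _ => ?_
  rw [term_eq, smul_smul]

lemma aBr_zero_left {K : Type} [Field K] (n : ℕ) (t : K) (y : Fin n → K) :
    aBr n t 0 y = 0 := by
  simp [aBr]

lemma aBr_zero_right {K : Type} [Field K] (n : ℕ) (t : K) (x : Fin n → K) :
    aBr n t x 0 = 0 := by
  simp [aBr]

lemma aBr_add_left {K : Type} [Field K] (n : ℕ) (t : K) (x x' y : Fin n → K) :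
    aBr n t (x + x') y = aBr n t x y + aBr n t x' y := by
  simp [aBr_eq, Pi.add_apply, add_mul, add_smul, Finset.sum_add_distrib]

lemma aBr_add_right {K : Type} [Field K] (n : ℕ) (t : K) (x y y' : Fin n → K) :
    aBr n t x (y + y') = aBr n t x y + aBr n t x y' := by
  simp [aBr_eq, Pi.add_apply, mul_add, add_mul, add_smul, Finset.sum_add_distrib]

lemma aBr_smul_left {K : Type} [Field K] (n : ℕ) (t : K) (c : K) (x y : Fin n → K) :
    aBr n t (c • x) y = c • aBr n t x y := by
  simp [aBr_eq, Pi.smul_apply, smul_eq_mul, Finset.smul_sum, smul_smul, mul_assoc]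

lemma aBr_smul_right {K : Type} [Field K] (n : ℕ) (t : K) (c : K) (x y : Fin n → K) :
    aBr n t x (c • y) = c • aBr n t x y := by
  simp [aBr_eq, Pi.smul_apply, smul_eq_mul, Finset.smul_sum, smul_smul, mul_assoc,
    mul_left_comm]

lemma aBr_sum_left {K : Type} [Field K] (n : ℕ) (t : K) {ι : Type} (A : Finset ι)
    (w : ι → Fin n → K) (y : Fin n → K) :
    aBr n t (∑ i ∈ A, w i) y = ∑ i ∈ A, aBr n t (w i) y := by
  classical
  induction A using Finset.cons_induction with
  | empty => simp [aBr_zero_left]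
  | cons a s h ih => rw [Finset.sum_cons, Finset.sum_cons, aBr_add_left, ih]

lemma aBr_sum_right {K : Type} [Field K] (n : ℕ) (t : K) {ι : Type} (A : Finset ι)
    (w : ι → Fin n → K) (x : Fin n → K) :
    aBr n t x (∑ i ∈ A, w i) = ∑ i ∈ A, aBr n t x (w i) := by
  classical
  induction A using Finset.cons_induction with
  | empty => simp [aBr_zero_right]
  | cons a s h ih => rw [Finset.sum_cons, Finset.sum_cons, aBr_add_right, ih]

lemma stdVec_expand {K : Type} [Field K] {n : ℕ} (x : Fin n → K) :
    x = ∑ p : Fin n, x p • stdVec K n (p : ℕ) := by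
  funext k
  rw [Finset.sum_apply]
  simp [stdVec, Fin.val_eq_val]

lemma aBr_basis {K : Type} [Field K] (n : ℕ) (t : K) (a b : ℕ) :
    aBr n t (stdVec K n a) (stdVec K n b)
      = gc n t a b • stdVec K n (a + b + 1) := by
  rcases lt_or_ge a n with ha | ha
  · rcases lt_or_ge b n with hb | hb
    · rw [aBr_eq]
      rw [Finset.sum_eq_single (⟨a, ha⟩ : Fin n)]
      · rw [Finset.sum_eq_single (⟨b, hb⟩ : Fin n)]
        · simp [stdVec]
        · intro j _ hj
          have : (j : ℕ) ≠ b := fun h => hj (Fin.ext h)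
          simp [stdVec, this]
        · simp
      · intro i _ hi
        have : (i : ℕ) ≠ a := fun h => hi (Fin.ext h)
        apply Finset.sum_eq_zero
        intro j _
        simp [stdVec, this]
      · simp
    · rw [stdVec_big hb, stdVec_big (show n ≤ a + b + 1 by omega), aBr_zero_right, smul_zero]
  · rw [stdVec_big ha, stdVec_big (show n ≤ a + b + 1 by omega), aBr_zero_left, smul_zero]

set_option maxHeartbeats 4000000 in
/-- The key scalar identity giving the Jacobi identity on basis vectors. -/
lemma gc_jacobi {K : Type} [Field K] (t : K) {n : ℕ} (hn : n = 7 ∨ n = 8)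
    (p q r : ℕ) (hp : p < n) (hq : q < n) (hr : r < n) :
    gc n t p q * gc n t (p + q + 1) r + gc n t q r * gc n t (q + r + 1) p
      + gc n t r p * gc n t (r + p + 1) q = 0 := by
  rcases hn with rfl | rfl <;>
    (interval_cases p <;> interval_cases q <;> interval_cases r <;> simp [gc, fc] <;> ring)

lemma jac_basis {K : Type} [Field K] (t : K) {n : ℕ} (hn : n = 7 ∨ n = 8)
    (p q r : Fin n) :
    aBr n t (aBr n t (stdVec K n (p : ℕ)) (stdVec K n (q : ℕ))) (stdVec K n (r : ℕ))
      + aBr n t (aBr n t (stdVec K n (q : ℕ)) (stdVec K n (r : ℕ))) (stdVec K n (p : ℕ))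
      + aBr n t (aBr n t (stdVec K n (r : ℕ)) (stdVec K n (p : ℕ))) (stdVec K n (q : ℕ))
      = 0 := by
  rw [aBr_basis, aBr_basis, aBr_basis, aBr_smul_left, aBr_smul_left, aBr_smul_left,
    aBr_basis, aBr_basis, aBr_basis, smul_smul, smul_smul, smul_smul]
  have e2 : (q : ℕ) + (r : ℕ) + 1 + (p : ℕ) + 1 = (p : ℕ) + (q : ℕ) + 1 + (r : ℕ) + 1 := by
    omega
  have e3 : (r : ℕ) + (p : ℕ) + 1 + (q : ℕ) + 1 = (p : ℕ) + (q : ℕ) + 1 + (r : ℕ) + 1 := by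
    omega
  rw [e2, e3, ← add_smul, ← add_smul,
    gc_jacobi t hn (p : ℕ) (q : ℕ) (r : ℕ) p.isLt q.isLt r.isLt, zero_smul]

lemma sum_rot {n : ℕ} {M : Type} [AddCommMonoid M] (f : Fin n → Fin n → Fin n → M) :
    (∑ a : Fin n, ∑ b : Fin n, ∑ c : Fin n, f a b c)
      = ∑ c : Fin n, ∑ a : Fin n, ∑ b : Fin n, f a b c := by
  calc (∑ a : Fin n, ∑ b : Fin n, ∑ c : Fin n, f a b c)
      = ∑ a : Fin n, ∑ c : Fin n, ∑ b : Fin n, f a b c :=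
        Finset.sum_congr rfl fun a _ => Finset.sum_comm
    _ = ∑ c : Fin n, ∑ a : Fin n, ∑ b : Fin n, f a b c := Finset.sum_comm

lemma sum_rot' {n : ℕ} {M : Type} [AddCommMonoid M] (f : Fin n → Fin n → Fin n → M) :
    (∑ a : Fin n, ∑ b : Fin n, ∑ c : Fin n, f a b c)
      = ∑ b : Fin n, ∑ c : Fin n, ∑ a : Fin n, f a b c := by
  calc (∑ a : Fin n, ∑ b : Fin n, ∑ c : Fin n, f a b c)
      = ∑ b : Fin n, ∑ a : Fin n, ∑ c : Fin n, f a b c := Finset.sum_comm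
    _ = ∑ b : Fin n, ∑ c : Fin n, ∑ a : Fin n, f a b c :=
        Finset.sum_congr rfl fun b _ => Finset.sum_comm

lemma aBr_expand1 {K : Type} [Field K] (n : ℕ) (t : K) (x y : Fin n → K) :
    aBr n t x y
      = ∑ p : Fin n, ∑ q : Fin n,
          (x p * y q) • aBr n t (stdVec K n (p : ℕ)) (stdVec K n (q : ℕ)) := by
  conv_lhs => rw [stdVec_expand x, stdVec_expand y]
  rw [aBr_sum_left]
  simp only [aBr_smul_left, aBr_sum_right, aBr_smul_right, Finset.smul_sum, smul_smul]
  exact Finset.sum_congr rfl fun p _ => Finset.sum_congr rfl fun q _ => by rw [mul_comm]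

lemma aBr_expand {K : Type} [Field K] (n : ℕ) (t : K) (x y z : Fin n → K) :
    aBr n t (aBr n t x y) z
      = ∑ p : Fin n, ∑ q : Fin n, ∑ r : Fin n,
          (x p * (y q * z r)) •
            aBr n t (aBr n t (stdVec K n (p : ℕ)) (stdVec K n (q : ℕ)))
              (stdVec K n (r : ℕ)) := by
  have hz := stdVec_expand z
  conv_lhs => rw [aBr_expand1 n t x y, hz]
  rw [aBr_sum_left]
  simp only [aBr_sum_left, aBr_smul_left, aBr_sum_right, aBr_smul_right,
    Finset.smul_sum, smul_smul, mul_assoc]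
  refine Finset.sum_congr rfl fun p _ => ?_
  rw [Finset.sum_comm]
  refine Finset.sum_congr rfl fun q _ => Finset.sum_congr rfl fun r _ => ?_
  rw [show z r * (x p * y q) = x p * (y q * z r) from by ring]

/-- For `n ∈ {7,8}` and every `t ∈ K`, the bracket of `𝔞_{4,n}(t)`
satisfies the Jacobi identity, hence defines a Lie algebra. -/
theorem stmt_16 {K : Type} [Field K] [CharZero K] [IsAlgClosed K] {n : ℕ}
    (hn : n = 7 ∨ n = 8) (t : K) :
    ∀ x y z : Fin n → K,
      aBr n t (aBr n t x y) z + aBr n t (aBr n t y z) x + aBr n t (aBr n t z x) y = 0 := by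
  intro x y z
  rw [aBr_expand n t x y z, aBr_expand n t y z x, aBr_expand n t z x y]
  rw [sum_rot fun q r p => (y q * (z r * x p)) •
    aBr n t (aBr n t (stdVec K n (q : ℕ)) (stdVec K n (r : ℕ))) (stdVec K n (p : ℕ))]
  rw [sum_rot' fun r p q => (z r * (x p * y q)) •
    aBr n t (aBr n t (stdVec K n (r : ℕ)) (stdVec K n (p : ℕ))) (stdVec K n (q : ℕ))]
  rw [← Finset.sum_add_distrib, ← Finset.sum_add_distrib]
  apply Finset.sum_eq_zero
  intro p _
  rw [← Finset.sum_add_distrib, ← Finset.sum_add_distrib]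
  apply Finset.sum_eq_zero
  intro q _
  rw [← Finset.sum_add_distrib, ← Finset.sum_add_distrib]
  apply Finset.sum_eq_zero
  intro r _
  rw [show y q * (z r * x p) = x p * (y q * z r) from by ring,
    show z r * (x p * y q) = x p * (y q * z r) from by ring,
    ← smul_add, ← smul_add, jac_basis t hn p q r, smul_zero]
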